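/- Let n ≥ 2, 1 < p̃₁, p̃₂ < ∞, n + α₂ > 0, and 0 < β < n. Then the fractional Hardy operator H_β maps L¹_{rad}L^{p̃₁}_{ang}(ℝⁿ) to the weak mixed space 𝓦L^{(n+α₂)/(n−β)}_{rad}L^{p̃₂}_{ang}(ℝⁿ, |x|^{α₂}) with operator norm exactly ω_n^{1/p̃₁' + 1/p̃₂} ν_n^{β/n − 1} (1/(n+α₂))^{(n−β)/(n+α₂)}. -/

import Mathlib

open MeasureTheory Set ENNReal Metric

/-- The surface measure on the unit sphere `S^{n-1}` in `ℝⁿ`. -/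
noncomputable def sphereMeasure (n : ℕ) :
    Measure (sphere (0 : EuclideanSpace ℝ (Fin n)) 1) :=
  (volume : Measure (EuclideanSpace ℝ (Fin n))).toSphere

/-- The weighted mixed radial-angular norm
`‖f‖_{L^p_{rad}L^{pt}_{ang}(ℝⁿ, r^α)} = (∫₀^∞ ‖f(r·)‖_{L^{pt}(S^{n-1})}^p r^{n-1+α} dr)^{1/p}`. -/
noncomputable def mixedNormW (n : ℕ) (p pt α : ℝ)
    (f : EuclideanSpace ℝ (Fin n) → ℝ) : ℝ≥0∞ :=
  (∫⁻ r in Ioi (0 : ℝ),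
    (∫⁻ θ : sphere (0 : EuclideanSpace ℝ (Fin n)) 1,
        ENNReal.ofReal |f (r • (θ : EuclideanSpace ℝ (Fin n)))| ^ pt
      ∂(sphereMeasure n)) ^ (p / pt) *
      ENNReal.ofReal (r ^ ((n : ℝ) - 1 + α))) ^ (1 / p)

/-- The weak weighted mixed radial-angular quasinorm
`sup_{λ>0} λ ‖𝟙_{|g|>λ}‖_{L^p_{rad}L^{pt}_{ang}(ℝⁿ, r^α)}`. -/
noncomputable def weakMixedNormW (n : ℕ) (p pt α : ℝ)
    (g : EuclideanSpace ℝ (Fin n) → ℝ) : ℝ≥0∞ :=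
  ⨆ (lam : ℝ) (_ : 0 < lam),
    ENNReal.ofReal lam * mixedNormW n p pt α (fun x => if lam < |g x| then 1 else 0)

/-- The fractional Hardy operator `H_β f(x) = |B(0,|x|)|^{β/n - 1} ∫_{|y|≤|x|} f(y) dy`. -/
noncomputable def fracHardy (n : ℕ) (β : ℝ) (f : EuclideanSpace ℝ (Fin n) → ℝ)
    (x : EuclideanSpace ℝ (Fin n)) : ℝ :=
  (volume (ball (0 : EuclideanSpace ℝ (Fin n)) ‖x‖)).toReal ^ (β / n - 1) *
    ∫ y in closedBall (0 : EuclideanSpace ℝ (Fin n)) ‖x‖, f y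

/-- The volume `ν_n` of the unit ball in `ℝⁿ`. -/
noncomputable def nu (n : ℕ) : ℝ :=
  (volume (ball (0 : EuclideanSpace ℝ (Fin n)) 1)).toReal

set_option linter.unusedVariables false


lemma lintegral_polar (n : ℕ) (hn : 1 ≤ n) (g : EuclideanSpace ℝ (Fin n) → ℝ≥0∞)
    (hg : Measurable g) :
    ∫⁻ x, g x = ∫⁻ r in Ioi (0:ℝ),
      (∫⁻ θ : sphere (0 : EuclideanSpace ℝ (Fin n)) 1, g (r • (θ : EuclideanSpace ℝ (Fin n)))
        ∂(sphereMeasure n)) * ENNReal.ofReal (r ^ (n - 1)) := by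
  haveI : Nonempty (Fin n) := Fin.pos_iff_nonempty.mp (by omega)
  let E := EuclideanSpace ℝ (Fin n)
  have hdim : Module.finrank ℝ E = n := finrank_euclideanSpace_fin
  have mp := (volume : Measure E).measurePreserving_homeomorphUnitSphereProd
  rw [hdim] at mp
  have hF : Measurable fun p : sphere (0:E) 1 × Ioi (0:ℝ) => g ((p.2 : ℝ) • (p.1 : E)) := by
    fun_prop
  calc ∫⁻ x, g x ∂(volume : Measure E)
      = ∫⁻ x in ({0}ᶜ : Set E), g x ∂volume := by
        rw [MeasureTheory.restrict_compl_singleton]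
    _ = ∫⁻ x : ({0}ᶜ : Set E), g x ∂((volume : Measure E).comap (↑)) :=
        (lintegral_subtype_comap (measurableSet_singleton 0).compl _).symm
    _ = ∫⁻ x : ({0}ᶜ : Set E), (fun p : sphere (0:E) 1 × Ioi (0:ℝ) => g ((p.2 : ℝ) • (p.1 : E)))
          (homeomorphUnitSphereProd E x) ∂((volume : Measure E).comap (↑)) := by
        refine lintegral_congr fun x => ?_
        simp only [homeomorphUnitSphereProd_apply_fst_coe, homeomorphUnitSphereProd_apply_snd_coe]
        rw [smul_inv_smul₀ (norm_ne_zero_iff.2 x.2)]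
    _ = ∫⁻ p : sphere (0:E) 1 × Ioi (0:ℝ), g ((p.2 : ℝ) • (p.1 : E))
          ∂((volume : Measure E).toSphere.prod (Measure.volumeIoiPow (n-1))) :=
        mp.lintegral_comp hF
    _ = ∫⁻ r : Ioi (0:ℝ), (∫⁻ θ, g ((r : ℝ) • (θ : E)) ∂(sphereMeasure n))
          ∂(Measure.volumeIoiPow (n-1)) := lintegral_prod_symm _ hF.aemeasurable
    _ = ∫⁻ r in Ioi (0:ℝ), ENNReal.ofReal (r ^ (n-1)) *
          (∫⁻ θ : sphere (0:E) 1, g (r • (θ : E)) ∂(sphereMeasure n)) ∂volume := by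
        haveI : SFinite (sphereMeasure n) := by
          unfold sphereMeasure; infer_instance
        rw [Measure.volumeIoiPow, lintegral_withDensity_eq_lintegral_mul _
          (by exact (measurable_subtype_coe.pow_const _).ennreal_ofReal)
          (Measurable.lintegral_prod_left
            (f := fun (θ : sphere (0:E) 1) (r : Ioi (0:ℝ)) => g ((r:ℝ) • (θ:E))) hF)]
        exact lintegral_subtype_comap measurableSet_Ioi
          (fun r : ℝ => ENNReal.ofReal (r ^ (n-1)) *
            ∫⁻ θ : sphere (0:E) 1, g (r • (θ : E)) ∂(sphereMeasure n))
    _ = ∫⁻ r in Ioi (0:ℝ), (∫⁻ θ : sphere (0:E) 1, g (r • (θ : E)) ∂(sphereMeasure n))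
          * ENNReal.ofReal (r ^ (n - 1)) ∂volume :=
        lintegral_congr fun r => mul_comm _ _


instance (n : ℕ) : IsFiniteMeasure (sphereMeasure n) := by
  unfold sphereMeasure; infer_instance

lemma nu_pos (n : ℕ) : 0 < nu n :=
  ENNReal.toReal_pos (measure_ball_pos _ _ one_pos).ne' measure_ball_lt_top.ne

lemma volume_unit_ball (n : ℕ) :
    volume (ball (0 : EuclideanSpace ℝ (Fin n)) 1) = ENNReal.ofReal (nu n) :=
  (ENNReal.ofReal_toReal measure_ball_lt_top.ne).symm

lemma sphereMeasure_univ (n : ℕ) :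
    sphereMeasure n univ = ENNReal.ofReal (n * nu n) := by
  unfold sphereMeasure
  rw [Measure.toSphere_apply_univ, finrank_euclideanSpace_fin, volume_unit_ball,
    ENNReal.ofReal_mul (by positivity), ENNReal.ofReal_natCast]

lemma sphere_holder (n : ℕ) {pt : ℝ} (hpt : 1 < pt)
    {φ : sphere (0 : EuclideanSpace ℝ (Fin n)) 1 → ℝ≥0∞}
    (hφ : AEMeasurable φ (sphereMeasure n)) :
    ∫⁻ θ, φ θ ∂(sphereMeasure n) ≤
      (∫⁻ θ, φ θ ^ pt ∂(sphereMeasure n)) ^ (1/pt) *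
        (sphereMeasure n univ) ^ (1 - 1/pt) := by
  have hpq : pt.HolderConjugate (pt / (pt - 1)) := Real.HolderConjugate.conjExponent hpt
  have h1 : (1 : ℝ) - 1/pt = 1 / (pt / (pt - 1)) := by
    field_simp
  have H := ENNReal.lintegral_mul_le_Lp_mul_Lq (sphereMeasure n) hpq hφ
    (aemeasurable_const (b := (1:ℝ≥0∞)))
  simp only [Pi.mul_apply, mul_one, ENNReal.one_rpow, lintegral_one] at H
  rw [← h1] at H
  exact H


instance (n : ℕ) : IsFiniteMeasure (sphereMeasure n) := by
  unfold sphereMeasure; infer_instance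

lemma mixedNorm_mono (n : ℕ) (p pt α : ℝ) (hp : 0 ≤ p) (hpt : 0 ≤ pt)
    {f g : EuclideanSpace ℝ (Fin n) → ℝ}
    (h : ∀ r : ℝ, 0 < r → ∀ θ : sphere (0 : EuclideanSpace ℝ (Fin n)) 1,
      |f (r • (θ : EuclideanSpace ℝ (Fin n)))| ≤ |g (r • (θ : EuclideanSpace ℝ (Fin n)))|) :
    mixedNormW n p pt α f ≤ mixedNormW n p pt α g := by
  unfold mixedNormW
  refine ENNReal.rpow_le_rpow ?_ (by positivity)
  refine lintegral_mono_ae ?_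
  filter_upwards [ae_restrict_mem measurableSet_Ioi] with r hr
  refine mul_le_mul_left (ENNReal.rpow_le_rpow ?_ (by positivity)) _
  exact lintegral_mono fun θ =>
    ENNReal.rpow_le_rpow (ENNReal.ofReal_le_ofReal (h r hr θ)) hpt

lemma mixedNorm_radial (n : ℕ) {p pt : ℝ} (α : ℝ) (hp : 0 < p) (hpt : 0 < pt)
    {f : EuclideanSpace ℝ (Fin n) → ℝ} {P : ℝ → Prop} [DecidablePred P]
    (hP : ∀ r : ℝ, 0 < r → ∀ θ : sphere (0 : EuclideanSpace ℝ (Fin n)) 1,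
      f (r • (θ : EuclideanSpace ℝ (Fin n))) = if P r then 1 else 0)
    (hPm : MeasurableSet {r | P r}) :
    mixedNormW n p pt α f = (sphereMeasure n univ) ^ (1/pt) *
      (∫⁻ r in {r | P r} ∩ Ioi (0:ℝ), ENNReal.ofReal (r ^ ((n:ℝ) - 1 + α))) ^ (1/p) := by
  classical
  unfold mixedNormW
  have key : ∀ᵐ r ∂(volume.restrict (Ioi (0:ℝ))),
      (∫⁻ θ : sphere (0 : EuclideanSpace ℝ (Fin n)) 1,
        ENNReal.ofReal |f (r • (θ : EuclideanSpace ℝ (Fin n)))| ^ pt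
          ∂(sphereMeasure n)) ^ (p / pt) * ENNReal.ofReal (r ^ ((n:ℝ) - 1 + α)) =
      {r : ℝ | P r}.indicator
        (fun r => (sphereMeasure n univ) ^ (p/pt) * ENNReal.ofReal (r ^ ((n:ℝ) - 1 + α))) r := by
    filter_upwards [ae_restrict_mem measurableSet_Ioi] with r hr
    have hval : ∀ θ : sphere (0 : EuclideanSpace ℝ (Fin n)) 1,
        ENNReal.ofReal |f (r • (θ : EuclideanSpace ℝ (Fin n)))| ^ pt
          = if P r then 1 else 0 := by
      intro θ
      rw [hP r hr θ]
      by_cases h : P r <;> simp [h, ENNReal.zero_rpow_of_pos hpt]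
    simp only [hval]
    by_cases h : P r
    · simp [h, Set.indicator_apply, lintegral_const]
    · simp [h, Set.indicator_apply, ENNReal.zero_rpow_of_pos (div_pos hp hpt)]
  rw [lintegral_congr_ae key, lintegral_indicator hPm, Measure.restrict_restrict hPm,
    lintegral_const_mul' _ _ (ENNReal.rpow_ne_top_of_nonneg (by positivity)
      (measure_ne_top _ _)),
    ENNReal.mul_rpow_of_nonneg _ _ (by positivity), ← ENNReal.rpow_mul]
  congr 2
  field_simp

lemma lint_weight {c : ℝ} (hc : -1 < c) {a b : ℝ} (ha : 0 ≤ a) (hab : a ≤ b) :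
    ∫⁻ r in Ioo a b, ENNReal.ofReal (r ^ c) =
      ENNReal.ofReal ((b ^ (c+1) - a ^ (c+1)) / (c+1)) := by
  rw [← ofReal_integral_eq_lintegral_ofReal]
  · congr 1
    rw [setIntegral_congr_set Ioo_ae_eq_Ioc, ← intervalIntegral.integral_of_le hab,
      integral_rpow (Or.inl hc)]
  · exact ((intervalIntegral.intervalIntegrable_rpow' hc).1).mono_set Ioo_subset_Ioc_self
  · filter_upwards [ae_restrict_mem measurableSet_Ioo] with x hx
    exact Real.rpow_nonneg (le_trans ha hx.1.le) _

lemma lintegral_le_mixed (n : ℕ) (hn : 1 ≤ n) {pt₁ : ℝ} (hpt₁ : 1 < pt₁)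
    (f : EuclideanSpace ℝ (Fin n) → ℝ) (hf : Measurable f) :
    ∫⁻ x, ENNReal.ofReal |f x| ≤
      (sphereMeasure n univ) ^ (1 - 1/pt₁) * mixedNormW n 1 pt₁ 0 f := by
  have hg : Measurable fun x : EuclideanSpace ℝ (Fin n) => ENNReal.ofReal |f x| :=
    hf.abs.ennreal_ofReal
  rw [lintegral_polar n hn _ hg]
  unfold mixedNormW
  have h1pt : (0:ℝ) ≤ 1 - 1/pt₁ := by
    rw [sub_nonneg]; exact (div_le_one (by linarith)).mpr (by linarith)
  rw [one_div_one, ENNReal.rpow_one,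
    ← lintegral_const_mul' _ _ (ENNReal.rpow_ne_top_of_nonneg h1pt (measure_ne_top _ _))]
  refine lintegral_mono_ae ?_
  filter_upwards [ae_restrict_mem measurableSet_Ioi] with r hr
  have hw : ENNReal.ofReal (r ^ (n - 1)) = ENNReal.ofReal (r ^ ((n:ℝ) - 1 + 0)) := by
    rw [add_zero]
    congr 1
    rw [show (n:ℝ) - 1 = ((n - 1 : ℕ) : ℝ) by push_cast [hn]; ring, Real.rpow_natCast]
  rw [hw]
  calc (∫⁻ θ : sphere (0 : EuclideanSpace ℝ (Fin n)) 1,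
          ENNReal.ofReal |f (r • (θ : EuclideanSpace ℝ (Fin n)))| ∂(sphereMeasure n)) *
        ENNReal.ofReal (r ^ ((n:ℝ) - 1 + 0))
      ≤ ((∫⁻ θ : sphere (0 : EuclideanSpace ℝ (Fin n)) 1,
          ENNReal.ofReal |f (r • (θ : EuclideanSpace ℝ (Fin n)))| ^ pt₁ ∂(sphereMeasure n))
            ^ (1/pt₁) * (sphereMeasure n univ) ^ (1 - 1/pt₁)) *
        ENNReal.ofReal (r ^ ((n:ℝ) - 1 + 0)) := by
        refine mul_le_mul_left (sphere_holder n hpt₁ ?_) _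
        fun_prop
    _ = (sphereMeasure n univ) ^ (1 - 1/pt₁) *
        ((∫⁻ θ : sphere (0 : EuclideanSpace ℝ (Fin n)) 1,
          ENNReal.ofReal |f (r • (θ : EuclideanSpace ℝ (Fin n)))| ^ pt₁ ∂(sphereMeasure n))
            ^ (1/pt₁) * ENNReal.ofReal (r ^ ((n:ℝ) - 1 + 0))) := by ring

lemma fracHardy_pointwise (n : ℕ) (hn : 2 ≤ n) {β pt₁ : ℝ} (hpt₁ : 1 < pt₁)
    {f : EuclideanSpace ℝ (Fin n) → ℝ} (hf : Measurable f)
    (hfin : mixedNormW n 1 pt₁ 0 f < ⊤)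
    (x : EuclideanSpace ℝ (Fin n)) (hx : x ≠ 0) :
    |fracHardy n β f x| ≤ (n * nu n) ^ (1 - 1/pt₁) * nu n ^ (β/n - 1) *
      (mixedNormW n 1 pt₁ 0 f).toReal * ‖x‖ ^ (β - n : ℝ) := by
  haveI : Nonempty (Fin n) := Fin.pos_iff_nonempty.mp (by omega)
  have hr : (0:ℝ) < ‖x‖ := norm_pos_iff.2 hx
  have hν := nu_pos n
  have hnR : (0:ℝ) < n := by positivity
  have h1pt : (0:ℝ) ≤ 1 - 1/pt₁ := by
    rw [sub_nonneg]; exact (div_le_one (by linarith)).mpr (by linarith)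
  set M := (mixedNormW n 1 pt₁ 0 f).toReal with hM
  have hM0 : 0 ≤ M := ENNReal.toReal_nonneg
  -- the volume factor
  have hball : (volume (ball (0 : EuclideanSpace ℝ (Fin n)) ‖x‖)).toReal = ‖x‖ ^ (n:ℕ) * nu n := by
    rw [Measure.addHaar_ball _ _ hr.le, finrank_euclideanSpace_fin, ENNReal.toReal_mul,
      ENNReal.toReal_ofReal (by positivity)]
    rfl
  have hpow : ((‖x‖ : ℝ) ^ (n:ℕ) * nu n) ^ (β/n - 1) = nu n ^ (β/n - 1) * ‖x‖ ^ (β - n : ℝ) := by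
    rw [Real.mul_rpow (by positivity) hν.le, ← Real.rpow_natCast ‖x‖ n, ← Real.rpow_mul hr.le]
    rw [mul_comm]
    congr 2
    field_simp
  -- the integral bound
  have hint : |∫ y in closedBall (0 : EuclideanSpace ℝ (Fin n)) ‖x‖, f y| ≤
      (n * nu n) ^ (1 - 1/pt₁) * M := by
    have h1 : |∫ y in closedBall (0 : EuclideanSpace ℝ (Fin n)) ‖x‖, f y| ≤
        ∫ y in closedBall (0 : EuclideanSpace ℝ (Fin n)) ‖x‖, |f y| := by
      simpa [Real.norm_eq_abs] using
        norm_integral_le_integral_norm (μ := volume.restrict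
          (closedBall (0 : EuclideanSpace ℝ (Fin n)) ‖x‖)) f
    have h2 : ∫ y in closedBall (0 : EuclideanSpace ℝ (Fin n)) ‖x‖, |f y| =
        (∫⁻ y in closedBall (0 : EuclideanSpace ℝ (Fin n)) ‖x‖,
          ENNReal.ofReal |f y|).toReal := by
      rw [integral_eq_lintegral_of_nonneg_ae (ae_of_all _ fun y => abs_nonneg _)
        (hf.abs.aestronglyMeasurable)]
    have h3 : (∫⁻ y in closedBall (0 : EuclideanSpace ℝ (Fin n)) ‖x‖,
          ENNReal.ofReal |f y|) ≤ ENNReal.ofReal ((n * nu n) ^ (1 - 1/pt₁)) *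
            mixedNormW n 1 pt₁ 0 f := by
      refine le_trans (setLIntegral_le_lintegral _ _) ?_
      have := lintegral_le_mixed n (by omega) hpt₁ f hf
      rwa [sphereMeasure_univ n, ENNReal.ofReal_rpow_of_pos (by positivity)] at this
    calc |∫ y in closedBall (0 : EuclideanSpace ℝ (Fin n)) ‖x‖, f y| ≤ _ := h1
      _ = _ := h2
      _ ≤ (ENNReal.ofReal ((n * nu n) ^ (1 - 1/pt₁)) * mixedNormW n 1 pt₁ 0 f).toReal := by
          refine ENNReal.toReal_mono ?_ h3
          exact (ENNReal.mul_lt_top ENNReal.ofReal_lt_top hfin).ne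
      _ = (n * nu n) ^ (1 - 1/pt₁) * M := by
          rw [ENNReal.toReal_mul, ENNReal.toReal_ofReal (by positivity)]
  calc |fracHardy n β f x|
      = (‖x‖ ^ (n:ℕ) * nu n) ^ (β/n - 1) *
        |∫ y in closedBall (0 : EuclideanSpace ℝ (Fin n)) ‖x‖, f y| := by
        rw [fracHardy, abs_mul, hball, abs_of_nonneg (by positivity)]
    _ ≤ (‖x‖ ^ (n:ℕ) * nu n) ^ (β/n - 1) * ((n * nu n) ^ (1 - 1/pt₁) * M) :=
        mul_le_mul_of_nonneg_left hint (by positivity)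
    _ = (n * nu n) ^ (1 - 1/pt₁) * nu n ^ (β/n - 1) * M * ‖x‖ ^ (β - n : ℝ) := by
        rw [hpow]; ring

lemma norm_smul_sphere (n : ℕ) {r : ℝ} (hr : 0 < r)
    (θ : sphere (0 : EuclideanSpace ℝ (Fin n)) 1) :
    ‖r • (θ : EuclideanSpace ℝ (Fin n))‖ = r := by
  rw [norm_smul, mem_sphere_zero_iff_norm.mp θ.2, mul_one, Real.norm_eq_abs, abs_of_pos hr]

lemma smul_sphere_ne_zero (n : ℕ) {r : ℝ} (hr : 0 < r)
    (θ : sphere (0 : EuclideanSpace ℝ (Fin n)) 1) :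
    r • (θ : EuclideanSpace ℝ (Fin n)) ≠ 0 := by
  intro h
  have := norm_smul_sphere n hr θ
  rw [h, norm_zero] at this
  exact hr.ne this

lemma upper_bound (n : ℕ) (hn : 2 ≤ n) (β pt₁ pt₂ α₂ : ℝ)
    (hpt₁ : 1 < pt₁) (hpt₂ : 1 < pt₂) (hα₂ : 0 < (n:ℝ) + α₂)
    (hβ₀ : 0 < β) (hβn : β < n)
    (f : EuclideanSpace ℝ (Fin n) → ℝ) (hf : Measurable f)
    (hfin : mixedNormW n 1 pt₁ 0 f < ⊤) :
    weakMixedNormW n (((n:ℝ) + α₂) / ((n:ℝ) - β)) pt₂ α₂ (fracHardy n β f)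
      ≤ ENNReal.ofReal ((↑n * nu n) ^ ((1 - 1/pt₁) + 1/pt₂) * nu n ^ (β/(n:ℝ) - 1) *
          (1 / ((n:ℝ) + α₂)) ^ (((n:ℝ) - β) / ((n:ℝ) + α₂))) * mixedNormW n 1 pt₁ 0 f := by
  have hν := nu_pos n
  have hnR : (0:ℝ) < n := by positivity
  have hnβ : (0:ℝ) < (n:ℝ) - β := by linarith
  set p := ((n:ℝ) + α₂) / ((n:ℝ) - β) with hpdef
  set γ := ((n:ℝ) - β) / ((n:ℝ) + α₂) with hγdef
  have hp : 0 < p := div_pos hα₂ hnβ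
  have hγ : 0 < γ := div_pos hnβ hα₂
  have h1p : 1/p = γ := one_div_div _ _
  have h1pt : (0:ℝ) ≤ 1 - 1/pt₁ := by
    rw [sub_nonneg]; exact (div_le_one (by linarith)).mpr (by linarith)
  set K := ((n:ℝ) * nu n) ^ (1 - 1/pt₁) * nu n ^ (β/(n:ℝ) - 1) with hKdef
  have hK : 0 < K := by positivity
  set M := (mixedNormW n 1 pt₁ 0 f).toReal with hMdef
  have hM : mixedNormW n 1 pt₁ 0 f = ENNReal.ofReal M := (ENNReal.ofReal_toReal hfin.ne).symm
  have hM0 : 0 ≤ M := ENNReal.toReal_nonneg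
  rw [weakMixedNormW]
  refine iSup₂_le fun lam hlam => ?_
  rcases eq_or_lt_of_le hM0 with hMz | hMpos
  · -- zero case
    have hzero := mixedNorm_radial n (p := p) (pt := pt₂) α₂ hp (by linarith)
      (f := fun x => if lam < |fracHardy n β f x| then 1 else 0) (P := fun _ => False)
      (fun r hr θ => by
        have hb := fracHardy_pointwise n hn (β := β) hpt₁ hf hfin
          (r • (θ : EuclideanSpace ℝ (Fin n))) (smul_sphere_ne_zero n hr θ)
        rw [← hMdef, ← hMz, mul_zero, zero_mul] at hb
        have hnl : ¬ lam < |fracHardy n β f (r • (θ : EuclideanSpace ℝ (Fin n)))| :=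
          not_lt.mpr (hb.trans hlam.le)
        simp [hnl])
      (MeasurableSet.const False)
    rw [hzero]
    simp only [setOf_false, empty_inter, Measure.restrict_empty, lintegral_zero_measure]
    rw [ENNReal.zero_rpow_of_pos (by rw [h1p]; exact hγ), mul_zero, mul_zero]
    exact zero_le
  · set R := (K * M / lam) ^ (((n:ℝ) - β)⁻¹) with hRdef
    have hKM : 0 < K * M / lam := by positivity
    have hR : 0 < R := Real.rpow_pos_of_pos hKM _
    have step1 : mixedNormW n p pt₂ α₂ (fun x => if lam < |fracHardy n β f x| then 1 else 0) ≤
        mixedNormW n p pt₂ α₂ (fun x => if ‖x‖ < R then 1 else 0) := by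
      refine mixedNorm_mono n p pt₂ α₂ hp.le (by linarith) fun r hr θ => ?_
      by_cases hcond : lam < |fracHardy n β f (r • (θ : EuclideanSpace ℝ (Fin n)))|
      · have hb := fracHardy_pointwise n hn (β := β) hpt₁ hf hfin
          (r • (θ : EuclideanSpace ℝ (Fin n))) (smul_sphere_ne_zero n hr θ)
        rw [← hMdef, norm_smul_sphere n hr θ] at hb
        have hlt : lam < K * M * r ^ (β - (n:ℝ)) := by
          refine lt_of_lt_of_le hcond (le_of_le_of_eq hb ?_)
          rw [hKdef]
        rw [show β - (n:ℝ) = -((n:ℝ) - β) by ring, Real.rpow_neg hr.le,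
          ← div_eq_mul_inv] at hlt
        have hu : 0 < r ^ ((n:ℝ) - β) := Real.rpow_pos_of_pos hr _
        rw [lt_div_iff₀ hu] at hlt
        have hlt2 : r ^ ((n:ℝ) - β) < K * M / lam := by
          rw [lt_div_iff₀ hlam]; linarith
        have hrR : r < R := by
          have hid : r = (r ^ ((n:ℝ) - β)) ^ (((n:ℝ) - β)⁻¹) := by
            rw [← Real.rpow_mul hr.le, mul_inv_cancel₀ hnβ.ne', Real.rpow_one]
          rw [hid, hRdef]
          exact Real.rpow_lt_rpow hu.le hlt2 (inv_pos.mpr hnβ)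
        rw [if_pos hcond, if_pos (by rwa [norm_smul_sphere n hr θ])]
      · rw [if_neg hcond, abs_zero]
        exact abs_nonneg _
    have step2 : mixedNormW n p pt₂ α₂ (fun x => if ‖x‖ < R then 1 else 0) =
        ENNReal.ofReal ((↑n * nu n) ^ (1/pt₂)) *
          ENNReal.ofReal ((R ^ ((n:ℝ) + α₂) / ((n:ℝ) + α₂)) ^ γ) := by
      rw [mixedNorm_radial n (pt := pt₂) α₂ hp (by linarith) (P := fun r => r < R)
        (fun r hr θ => by rw [norm_smul_sphere n hr θ]) measurableSet_Iio]
      have hset : {r : ℝ | r < R} ∩ Ioi (0:ℝ) = Ioo 0 R := by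
        ext r; simp only [mem_inter_iff, mem_setOf_eq, mem_Ioi, mem_Ioo]; tauto
      rw [hset, lint_weight (by linarith : (-1:ℝ) < (n:ℝ) - 1 + α₂) le_rfl hR.le]
      rw [sphereMeasure_univ n, ENNReal.ofReal_rpow_of_pos (by positivity), h1p,
        show (n:ℝ) - 1 + α₂ + 1 = (n:ℝ) + α₂ by ring,
        Real.zero_rpow (by positivity : (n:ℝ) + α₂ ≠ 0), sub_zero,
        ENNReal.ofReal_rpow_of_pos (by positivity)]
    calc ENNReal.ofReal lam *
          mixedNormW n p pt₂ α₂ (fun x => if lam < |fracHardy n β f x| then 1 else 0)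
        ≤ ENNReal.ofReal lam * (ENNReal.ofReal ((↑n * nu n) ^ (1/pt₂)) *
            ENNReal.ofReal ((R ^ ((n:ℝ) + α₂) / ((n:ℝ) + α₂)) ^ γ)) := by
          rw [← step2]; exact mul_le_mul_right step1 _
      _ = ENNReal.ofReal (lam * ((↑n * nu n) ^ (1/pt₂) *
            (R ^ ((n:ℝ) + α₂) / ((n:ℝ) + α₂)) ^ γ)) := by
          rw [← ENNReal.ofReal_mul (by positivity), ← ENNReal.ofReal_mul hlam.le]
      _ = ENNReal.ofReal ((↑n * nu n) ^ ((1 - 1/pt₁) + 1/pt₂) * nu n ^ (β/(n:ℝ) - 1) *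
            (1 / ((n:ℝ) + α₂)) ^ γ * M) := by
          congr 1
          have e1 : (R ^ ((n:ℝ) + α₂) / ((n:ℝ) + α₂)) ^ γ =
              (R ^ ((n:ℝ) + α₂)) ^ γ * (1 / ((n:ℝ) + α₂)) ^ γ := by
            rw [div_eq_mul_inv, Real.mul_rpow (by positivity) (by positivity), one_div]
          have e2 : (R ^ ((n:ℝ) + α₂)) ^ γ = K * M / lam := by
            rw [← Real.rpow_mul hR.le,
              show ((n:ℝ) + α₂) * γ = (n:ℝ) - β by
                rw [hγdef]; field_simp,
              hRdef, ← Real.rpow_mul hKM.le, inv_mul_cancel₀ hnβ.ne', Real.rpow_one]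
          have e3 : ((n:ℝ) * nu n) ^ ((1 - 1/pt₁) + 1/pt₂) =
              ((n:ℝ) * nu n) ^ (1 - 1/pt₁) * ((n:ℝ) * nu n) ^ (1/pt₂) :=
            Real.rpow_add (by positivity) _ _
          rw [e1, e2, e3, hKdef]
          field_simp
      _ = _ := by rw [hM, ENNReal.ofReal_mul (by positivity)]

section Lower
variable (n : ℕ)

/-- The extremizing function: indicator of the unit ball. -/
noncomputable def f₀ : EuclideanSpace ℝ (Fin n) → ℝ :=
  fun x => if ‖x‖ ≤ 1 then 1 else 0

lemma f₀_measurable : Measurable (f₀ n) :=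
  Measurable.ite (measurableSet_le measurable_norm measurable_const)
    measurable_const measurable_const

lemma f₀_mixedNorm (hn : 2 ≤ n) {pt₁ : ℝ} (hpt₁ : 1 < pt₁) :
    mixedNormW n 1 pt₁ 0 (f₀ n) =
      ENNReal.ofReal (((n:ℝ) * nu n) ^ (1/pt₁) * (1/(n:ℝ))) := by
  have hν := nu_pos n
  have hnR : (0:ℝ) < n := by positivity
  rw [mixedNorm_radial n (p := 1) (pt := pt₁) 0 one_pos (by linarith) (P := fun r => r ≤ 1)
    (fun r hr θ => by rw [f₀, norm_smul_sphere n hr θ]) measurableSet_Iic]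
  have hset : {r : ℝ | r ≤ 1} ∩ Ioi (0:ℝ) = Ioc 0 1 := by
    ext r; simp only [mem_inter_iff, mem_setOf_eq, mem_Ioi, mem_Ioc]; tauto
  rw [hset, ← setLIntegral_congr (Ioo_ae_eq_Ioc (μ := volume) (a := (0:ℝ)) (b := (1:ℝ))),
    lint_weight (by linarith : (-1:ℝ) < (n:ℝ) - 1 + 0) le_rfl zero_le_one]
  rw [sphereMeasure_univ n, ENNReal.ofReal_rpow_of_pos (by positivity),
    show (n:ℝ) - 1 + 0 + 1 = (n:ℝ) by ring, Real.one_rpow,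
    Real.zero_rpow hnR.ne', sub_zero, one_div_one, ENNReal.rpow_one,
    ← ENNReal.ofReal_mul (by positivity)]

lemma f₀_hardy (hn : 2 ≤ n) {β : ℝ} (hβ₀ : 0 < β) (hβn : β < n)
    {r : ℝ} (hr : 0 < r) (θ : sphere (0 : EuclideanSpace ℝ (Fin n)) 1) :
    fracHardy n β (f₀ n) (r • (θ : EuclideanSpace ℝ (Fin n))) =
      nu n ^ (β/(n:ℝ)) * (min r 1) ^ (n:ℕ) * r ^ (β - (n:ℝ)) := by
  classical
  haveI : Nonempty (Fin n) := Fin.pos_iff_nonempty.mp (by omega)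
  have hν := nu_pos n
  have hnR : (0:ℝ) < n := by positivity
  have hnorm := norm_smul_sphere n hr θ
  have hind : f₀ n = (closedBall (0 : EuclideanSpace ℝ (Fin n)) 1).indicator
      (fun _ => (1:ℝ)) := by
    funext x
    rw [f₀, Set.indicator_apply]
    by_cases h : ‖x‖ ≤ 1
    · rw [if_pos h, if_pos (mem_closedBall_zero_iff.mpr h)]
    · rw [if_neg h, if_neg (fun hc => h (mem_closedBall_zero_iff.mp hc))]
  have hinter : closedBall (0 : EuclideanSpace ℝ (Fin n)) r ∩
      closedBall (0 : EuclideanSpace ℝ (Fin n)) 1 =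
      closedBall (0 : EuclideanSpace ℝ (Fin n)) (min r 1) := by
    rcases le_total r 1 with h | h
    · rw [min_eq_left h, inter_eq_left.mpr (closedBall_subset_closedBall h)]
    · rw [min_eq_right h, inter_eq_right.mpr (closedBall_subset_closedBall h)]
  have hint : ∫ y in closedBall (0 : EuclideanSpace ℝ (Fin n))
      ‖r • (θ : EuclideanSpace ℝ (Fin n))‖, f₀ n y = (min r 1) ^ (n:ℕ) * nu n := by
    rw [hnorm, hind, setIntegral_indicator measurableSet_closedBall, hinter,
      setIntegral_const, smul_eq_mul, mul_one, Measure.addHaar_real_closedBall _ _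
        (le_min hr.le zero_le_one), finrank_euclideanSpace_fin]
    rfl
  have hball : (volume (ball (0 : EuclideanSpace ℝ (Fin n))
      ‖r • (θ : EuclideanSpace ℝ (Fin n))‖)).toReal = r ^ (n:ℕ) * nu n := by
    rw [hnorm, Measure.addHaar_ball _ _ hr.le, finrank_euclideanSpace_fin, ENNReal.toReal_mul,
      ENNReal.toReal_ofReal (by positivity)]
    rfl
  rw [fracHardy, hint, hball]
  have he : (n:ℝ) * (β/(n:ℝ) - 1) = β - (n:ℝ) := by field_simp
  rw [Real.mul_rpow (by positivity) hν.le, ← Real.rpow_natCast r (n:ℕ),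
    ← Real.rpow_mul hr.le, he]
  have hν_e : nu n ^ (β/(n:ℝ) - 1) * nu n = nu n ^ (β/(n:ℝ)) := by
    rw [← Real.rpow_add_one hν.ne']
    norm_num
  linear_combination ((min r 1) ^ (n:ℕ) * r ^ (β - (n:ℝ))) * hν_e
end Lower

lemma lower_bound (n : ℕ) (hn : 2 ≤ n) (β pt₁ pt₂ α₂ : ℝ)
    (hpt₁ : 1 < pt₁) (hpt₂ : 1 < pt₂) (hα₂ : 0 < (n:ℝ) + α₂)
    (hβ₀ : 0 < β) (hβn : β < n) (C : ℝ≥0∞)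
    (h : weakMixedNormW n (((n:ℝ) + α₂)/((n:ℝ) - β)) pt₂ α₂ (fracHardy n β (f₀ n)) ≤
      C * mixedNormW n 1 pt₁ 0 (f₀ n)) :
    ENNReal.ofReal (((n:ℝ) * nu n) ^ ((1 - 1/pt₁) + 1/pt₂) * nu n ^ (β/(n:ℝ) - 1) *
        (1 / ((n:ℝ) + α₂)) ^ (((n:ℝ) - β) / ((n:ℝ) + α₂))) ≤ C := by
  have hν := nu_pos n
  have hnR : (0:ℝ) < n := by positivity
  have hnβ : (0:ℝ) < (n:ℝ) - β := by linarith
  have hβnlt : β - (n:ℝ) < 0 := by linarith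
  have hβnne : β - (n:ℝ) ≠ 0 := ne_of_lt hβnlt
  set p := ((n:ℝ) + α₂) / ((n:ℝ) - β) with hpdef
  set γ := ((n:ℝ) - β) / ((n:ℝ) + α₂) with hγdef
  have hp : 0 < p := div_pos hα₂ hnβ
  have hγ : 0 < γ := div_pos hnβ hα₂
  have h1p : 1/p = γ := one_div_div _ _
  set c := (((n:ℝ) + α₂) * n) / (β * ((n:ℝ) - β)) with hcdef
  have hc : 0 < c := by positivity
  have hNfr : (0:ℝ) < ((n:ℝ) * nu n) ^ (1/pt₁) * (1/(n:ℝ)) := by positivity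
  have hNorm := f₀_mixedNorm n hn hpt₁
  have hT : (0:ℝ) < ((n:ℝ) * nu n) ^ ((1 - 1/pt₁) + 1/pt₂) * nu n ^ (β/(n:ℝ) - 1) *
      (1 / ((n:ℝ) + α₂)) ^ γ := by positivity
  -- constant algebra
  have hν_e : nu n ^ (β/(n:ℝ) - 1) * nu n = nu n ^ (β/(n:ℝ)) := by
    rw [← Real.rpow_add_one hν.ne']
    norm_num
  have hω2 : ((n:ℝ)*nu n) ^ ((1 - 1/pt₁) + 1/pt₂) * ((n:ℝ)*nu n) ^ (1/pt₁) * (1/(n:ℝ)) =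
      nu n * ((n:ℝ)*nu n) ^ (1/pt₂) := by
    rw [← Real.rpow_add (by positivity), show (1 - 1/pt₁) + 1/pt₂ + 1/pt₁ = 1 + 1/pt₂ by ring,
      Real.rpow_add (by positivity), Real.rpow_one]
    field_simp
  have e1 : (((n:ℝ) * nu n) ^ ((1 - 1/pt₁) + 1/pt₂) * nu n ^ (β/(n:ℝ) - 1) *
        (1 / ((n:ℝ) + α₂)) ^ γ) * (((n:ℝ) * nu n) ^ (1/pt₁) * (1/(n:ℝ))) =
      nu n ^ (β/(n:ℝ)) * ((n:ℝ)*nu n) ^ (1/pt₂) * (1 / ((n:ℝ) + α₂)) ^ γ := by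
    linear_combination (nu n ^ (β/(n:ℝ) - 1) * (1 / ((n:ℝ) + α₂)) ^ γ) * hω2 +
      (((n:ℝ)*nu n) ^ (1/pt₂) * (1 / ((n:ℝ) + α₂)) ^ γ) * hν_e
  -- main estimate for each s ∈ (0,1)
  have key : ∀ s : ℝ, 0 < s → s < 1 →
      ENNReal.ofReal ((((n:ℝ) * nu n) ^ ((1 - 1/pt₁) + 1/pt₂) * nu n ^ (β/(n:ℝ) - 1) *
          (1 / ((n:ℝ) + α₂)) ^ γ) * (((n:ℝ) * nu n) ^ (1/pt₁) * (1/(n:ℝ))) * (1-s) ^ γ) ≤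
        C * ENNReal.ofReal (((n:ℝ) * nu n) ^ (1/pt₁) * (1/(n:ℝ))) := by
    intro s hs0 hs1
    have hs1' : (0:ℝ) < 1 - s := by linarith
    set t := s ^ c⁻¹ with htdef
    have ht0 : 0 < t := Real.rpow_pos_of_pos hs0 _
    have ht1 : t < 1 := Real.rpow_lt_one hs0.le hs1 (inv_pos.mpr hc)
    have hts : t ^ c = s := by
      rw [htdef, ← Real.rpow_mul hs0.le, inv_mul_cancel₀ hc.ne', Real.rpow_one]
    set a := t ^ β⁻¹ with hadef
    set b := t ^ (β - (n:ℝ))⁻¹ with hbdef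
    have ha0 : 0 < a := Real.rpow_pos_of_pos ht0 _
    have hb0 : 0 < b := Real.rpow_pos_of_pos ht0 _
    have ha1 : a < 1 := Real.rpow_lt_one ht0.le ht1 (inv_pos.mpr hβ₀)
    have hb1 : 1 < b := by
      rw [hbdef, Real.one_lt_rpow_iff_of_pos ht0]
      exact Or.inr ⟨ht1, inv_lt_zero.mpr hβnlt⟩
    have hab : a < b := ha1.trans hb1
    set lam := nu n ^ (β/(n:ℝ)) * t with hlamdef
    have hlam : 0 < lam := by positivity
    -- pointwise superlevel inclusion
    have hpoint : ∀ r : ℝ, 0 < r → a < r → r < b →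
        ∀ θ : sphere (0 : EuclideanSpace ℝ (Fin n)) 1,
        lam < fracHardy n β (f₀ n) (r • (θ : EuclideanSpace ℝ (Fin n))) := by
      intro r hr har hrb θ
      rw [f₀_hardy n hn hβ₀ hβn hr θ]
      rcases le_or_gt r 1 with hr1 | hr1
      · rw [min_eq_left hr1, mul_assoc, ← Real.rpow_natCast r n, ← Real.rpow_add hr,
          show (n:ℝ) + (β - (n:ℝ)) = β by ring]
        refine mul_lt_mul_of_pos_left ?_ (by positivity)
        have h2 : a ^ β < r ^ β := Real.rpow_lt_rpow ha0.le har hβ₀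
        rwa [hadef, ← Real.rpow_mul ht0.le, inv_mul_cancel₀ hβ₀.ne', Real.rpow_one] at h2
      · rw [min_eq_right hr1.le, one_pow, mul_one]
        refine mul_lt_mul_of_pos_left ?_ (by positivity)
        have h2 : b ^ (β - (n:ℝ)) < r ^ (β - (n:ℝ)) :=
          Real.rpow_lt_rpow_of_neg hr hrb hβnlt
        rwa [hbdef, ← Real.rpow_mul ht0.le, inv_mul_cancel₀ hβnne, Real.rpow_one] at h2
    -- monotonicity step
    have hmono : mixedNormW n p pt₂ α₂ (fun x => if a < ‖x‖ ∧ ‖x‖ < b then 1 else 0) ≤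
        mixedNormW n p pt₂ α₂
          (fun x => if lam < |fracHardy n β (f₀ n) x| then 1 else 0) := by
      refine mixedNorm_mono n p pt₂ α₂ hp.le (by linarith) fun r hr θ => ?_
      by_cases hcond : a < ‖r • (θ : EuclideanSpace ℝ (Fin n))‖ ∧
          ‖r • (θ : EuclideanSpace ℝ (Fin n))‖ < b
      · have hcond' := hcond
        rw [norm_smul_sphere n hr θ] at hcond'
        have habs : lam < |fracHardy n β (f₀ n) (r • (θ : EuclideanSpace ℝ (Fin n)))| :=
          lt_of_lt_of_le (hpoint r hr hcond'.1 hcond'.2 θ) (le_abs_self _)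
        rw [if_pos hcond, if_pos habs]
      · rw [if_neg hcond, abs_zero]
        exact abs_nonneg _
    -- computation of the small norm
    have hbax : a ^ ((n:ℝ) + α₂) < b ^ ((n:ℝ) + α₂) := Real.rpow_lt_rpow ha0.le hab hα₂
    have hcompute : mixedNormW n p pt₂ α₂ (fun x => if a < ‖x‖ ∧ ‖x‖ < b then 1 else 0) =
        ENNReal.ofReal (((n:ℝ)*nu n) ^ (1/pt₂)) *
          ENNReal.ofReal (((b ^ ((n:ℝ)+α₂) - a ^ ((n:ℝ)+α₂)) / ((n:ℝ)+α₂)) ^ γ) := by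
      rw [mixedNorm_radial n (pt := pt₂) α₂ hp (by linarith) (P := fun r => a < r ∧ r < b)
        (fun r hr θ => by rw [norm_smul_sphere n hr θ])
        (by exact measurableSet_Ioo)]
      have hset : {r : ℝ | a < r ∧ r < b} ∩ Ioi (0:ℝ) = Ioo a b := by
        ext r
        simp only [mem_inter_iff, mem_setOf_eq, mem_Ioi, mem_Ioo]
        exact ⟨fun hh => hh.1, fun hh => ⟨hh, ha0.trans hh.1⟩⟩
      rw [hset, lint_weight (by linarith : (-1:ℝ) < (n:ℝ)-1+α₂) ha0.le hab.le,
        sphereMeasure_univ n, ENNReal.ofReal_rpow_of_pos (by positivity), h1p,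
        show (n:ℝ)-1+α₂+1 = (n:ℝ)+α₂ by ring,
        ENNReal.ofReal_rpow_of_pos (div_pos (by linarith) hα₂)]
    -- the real-number identity
    have hs_ab : a ^ ((n:ℝ)+α₂) = b ^ ((n:ℝ)+α₂) * s := by
      rw [hadef, hbdef, ← Real.rpow_mul ht0.le, ← Real.rpow_mul ht0.le, ← hts,
        ← Real.rpow_add ht0]
      congr 1
      rw [hcdef]
      field_simp
      ring
    have hfact : ((b ^ ((n:ℝ)+α₂) - a ^ ((n:ℝ)+α₂)) / ((n:ℝ)+α₂)) ^ γ =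
        (b ^ ((n:ℝ)+α₂)) ^ γ * ((1-s) ^ γ * (1/((n:ℝ)+α₂)) ^ γ) := by
      have h1 : (b ^ ((n:ℝ)+α₂) - a ^ ((n:ℝ)+α₂)) / ((n:ℝ)+α₂) =
          b ^ ((n:ℝ)+α₂) * ((1-s) * (1/((n:ℝ)+α₂))) := by
        rw [hs_ab]
        field_simp
      rw [h1, Real.mul_rpow (by positivity) (mul_nonneg hs1'.le (by positivity)),
        Real.mul_rpow hs1'.le (by positivity)]
    have hbγ : (b ^ ((n:ℝ)+α₂)) ^ γ = t⁻¹ := by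
      rw [hbdef, ← Real.rpow_mul ht0.le, ← Real.rpow_mul ht0.le,
        show (β-(n:ℝ))⁻¹ * ((n:ℝ)+α₂) * γ = -1 by
          rw [hγdef]; field_simp; ring,
        Real.rpow_neg_one]
    have hreal : lam * (((n:ℝ)*nu n) ^ (1/pt₂) *
        ((b ^ ((n:ℝ)+α₂) - a ^ ((n:ℝ)+α₂)) / ((n:ℝ)+α₂)) ^ γ) =
        (((n:ℝ) * nu n) ^ ((1 - 1/pt₁) + 1/pt₂) * nu n ^ (β/(n:ℝ) - 1) *
          (1 / ((n:ℝ) + α₂)) ^ γ) * (((n:ℝ) * nu n) ^ (1/pt₁) * (1/(n:ℝ))) * (1-s) ^ γ := by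
      rw [hfact, hbγ, e1, hlamdef]
      field_simp
    -- combine
    have hW : ENNReal.ofReal lam * mixedNormW n p pt₂ α₂
        (fun x => if lam < |fracHardy n β (f₀ n) x| then 1 else 0) ≤
        weakMixedNormW n p pt₂ α₂ (fracHardy n β (f₀ n)) := by
      rw [weakMixedNormW]
      exact le_iSup₂_of_le lam hlam le_rfl
    calc ENNReal.ofReal ((((n:ℝ) * nu n) ^ ((1 - 1/pt₁) + 1/pt₂) * nu n ^ (β/(n:ℝ) - 1) *
          (1 / ((n:ℝ) + α₂)) ^ γ) * (((n:ℝ) * nu n) ^ (1/pt₁) * (1/(n:ℝ))) * (1-s) ^ γ)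
        = ENNReal.ofReal (lam * (((n:ℝ)*nu n) ^ (1/pt₂) *
            ((b ^ ((n:ℝ)+α₂) - a ^ ((n:ℝ)+α₂)) / ((n:ℝ)+α₂)) ^ γ)) := by rw [hreal]
      _ = ENNReal.ofReal lam * (ENNReal.ofReal (((n:ℝ)*nu n) ^ (1/pt₂)) *
            ENNReal.ofReal (((b ^ ((n:ℝ)+α₂) - a ^ ((n:ℝ)+α₂)) / ((n:ℝ)+α₂)) ^ γ)) := by
          rw [← ENNReal.ofReal_mul (by positivity), ← ENNReal.ofReal_mul hlam.le]
      _ = ENNReal.ofReal lam * mixedNormW n p pt₂ α₂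
            (fun x => if a < ‖x‖ ∧ ‖x‖ < b then 1 else 0) := by rw [hcompute]
      _ ≤ ENNReal.ofReal lam * mixedNormW n p pt₂ α₂
            (fun x => if lam < |fracHardy n β (f₀ n) x| then 1 else 0) :=
          mul_le_mul_right hmono _
      _ ≤ weakMixedNormW n p pt₂ α₂ (fracHardy n β (f₀ n)) := hW
      _ ≤ C * mixedNormW n 1 pt₁ 0 (f₀ n) := h
      _ = C * ENNReal.ofReal (((n:ℝ) * nu n) ^ (1/pt₁) * (1/(n:ℝ))) := by rw [hNorm]
  -- pass to the limit s → 0⁺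
  have hlim : Filter.Tendsto (fun s : ℝ =>
      ENNReal.ofReal ((((n:ℝ) * nu n) ^ ((1 - 1/pt₁) + 1/pt₂) * nu n ^ (β/(n:ℝ) - 1) *
        (1 / ((n:ℝ) + α₂)) ^ γ) * (((n:ℝ) * nu n) ^ (1/pt₁) * (1/(n:ℝ))) * (1-s) ^ γ))
      (nhdsWithin 0 (Ioi 0))
      (nhds (ENNReal.ofReal ((((n:ℝ) * nu n) ^ ((1 - 1/pt₁) + 1/pt₂) * nu n ^ (β/(n:ℝ) - 1) *
        (1 / ((n:ℝ) + α₂)) ^ γ) * (((n:ℝ) * nu n) ^ (1/pt₁) * (1/(n:ℝ)))))) := by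
    have h2 : ContinuousAt (fun s : ℝ => (1:ℝ) - s) 0 := by fun_prop
    have h3 : ContinuousAt (fun y : ℝ => y ^ γ) ((1:ℝ) - 0) :=
      Real.continuousAt_rpow_const _ _ (Or.inl (by norm_num))
    have h1 : ContinuousAt (fun s : ℝ =>
        (((n:ℝ) * nu n) ^ ((1 - 1/pt₁) + 1/pt₂) * nu n ^ (β/(n:ℝ) - 1) *
        (1 / ((n:ℝ) + α₂)) ^ γ) * (((n:ℝ) * nu n) ^ (1/pt₁) * (1/(n:ℝ))) * (1-s) ^ γ) 0 :=
      continuousAt_const.mul (h3.comp h2)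
    have h4 := (ENNReal.continuous_ofReal.continuousAt.comp h1)
    have h5 : (((n:ℝ) * nu n) ^ ((1 - 1/pt₁) + 1/pt₂) * nu n ^ (β/(n:ℝ) - 1) *
        (1 / ((n:ℝ) + α₂)) ^ γ) * (((n:ℝ) * nu n) ^ (1/pt₁) * (1/(n:ℝ))) * (1-(0:ℝ)) ^ γ =
        (((n:ℝ) * nu n) ^ ((1 - 1/pt₁) + 1/pt₂) * nu n ^ (β/(n:ℝ) - 1) *
        (1 / ((n:ℝ) + α₂)) ^ γ) * (((n:ℝ) * nu n) ^ (1/pt₁) * (1/(n:ℝ))) := by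
      rw [sub_zero, Real.one_rpow, mul_one]
    have h6 : Filter.Tendsto (fun s : ℝ =>
        ENNReal.ofReal ((((n:ℝ) * nu n) ^ ((1 - 1/pt₁) + 1/pt₂) * nu n ^ (β/(n:ℝ) - 1) *
          (1 / ((n:ℝ) + α₂)) ^ γ) * (((n:ℝ) * nu n) ^ (1/pt₁) * (1/(n:ℝ))) * (1-s) ^ γ))
        (nhds 0) (nhds (ENNReal.ofReal ((((n:ℝ) * nu n) ^ ((1 - 1/pt₁) + 1/pt₂) *
          nu n ^ (β/(n:ℝ) - 1) * (1 / ((n:ℝ) + α₂)) ^ γ) *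
          (((n:ℝ) * nu n) ^ (1/pt₁) * (1/(n:ℝ))) * (1-(0:ℝ)) ^ γ))) := h4
    rw [h5] at h6
    exact h6.mono_left nhdsWithin_le_nhds
  have hfinal : ENNReal.ofReal ((((n:ℝ) * nu n) ^ ((1 - 1/pt₁) + 1/pt₂) *
      nu n ^ (β/(n:ℝ) - 1) * (1 / ((n:ℝ) + α₂)) ^ γ) *
      (((n:ℝ) * nu n) ^ (1/pt₁) * (1/(n:ℝ)))) ≤
      C * ENNReal.ofReal (((n:ℝ) * nu n) ^ (1/pt₁) * (1/(n:ℝ))) := by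
    refine le_of_tendsto hlim ?_
    filter_upwards [Ioo_mem_nhdsGT_of_mem (Set.left_mem_Ico.mpr one_pos)] with s hs
    exact key s hs.1 hs.2
  rw [ENNReal.ofReal_mul hT.le] at hfinal
  exact (ENNReal.mul_le_mul_iff_left (ENNReal.ofReal_pos.mpr hNfr).ne'
    ENNReal.ofReal_ne_top).mp hfinal

/-- Endpoint case: the fractional Hardy operator maps `L¹_{rad}L^{p̃₁}_{ang}(ℝⁿ)` to
`𝓦L^{(n+α₂)/(n−β)}_{rad}L^{p̃₂}_{ang}(ℝⁿ, |x|^{α₂})` with operator norm exactly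
`ω_n^{1/p̃₁' + 1/p̃₂} ν_n^{β/n − 1} (1/(n+α₂))^{(n−β)/(n+α₂)}`. -/
theorem fracHardy_mixed_weak_endpoint (n : ℕ) (hn : 2 ≤ n) (β pt₁ pt₂ α₂ : ℝ)
    (hpt₁ : 1 < pt₁) (hpt₂ : 1 < pt₂) (hα₂ : 0 < n + α₂)
    (hβ₀ : 0 < β) (hβn : β < n) :
    (∀ f : EuclideanSpace ℝ (Fin n) → ℝ, Measurable f → mixedNormW n 1 pt₁ 0 f < ⊤ →
      weakMixedNormW n ((n + α₂) / (n - β)) pt₂ α₂ (fracHardy n β f)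
        ≤ ENNReal.ofReal ((n * nu n) ^ ((1 - 1 / pt₁) + 1 / pt₂) * nu n ^ (β / n - 1) *
            (1 / (n + α₂)) ^ ((n - β) / (n + α₂))) * mixedNormW n 1 pt₁ 0 f) ∧
    (∀ C : ℝ≥0∞,
      (∀ f : EuclideanSpace ℝ (Fin n) → ℝ, Measurable f → mixedNormW n 1 pt₁ 0 f < ⊤ →
        weakMixedNormW n ((n + α₂) / (n - β)) pt₂ α₂ (fracHardy n β f)
          ≤ C * mixedNormW n 1 pt₁ 0 f) →
      ENNReal.ofReal ((n * nu n) ^ ((1 - 1 / pt₁) + 1 / pt₂) * nu n ^ (β / n - 1) *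
          (1 / (n + α₂)) ^ ((n - β) / (n + α₂))) ≤ C) := by
  constructor
  · intro f hf hfin
    exact upper_bound n hn β pt₁ pt₂ α₂ hpt₁ hpt₂ hα₂ hβ₀ hβn f hf hfin
  · intro C hC
    refine lower_bound n hn β pt₁ pt₂ α₂ hpt₁ hpt₂ hα₂ hβ₀ hβn C ?_
    refine hC (f₀ n) (f₀_measurable n) ?_
    rw [f₀_mixedNorm n hn hpt₁]
    exact ENNReal.ofReal_lt_top
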